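/- Let G be a connected graph and suppose v has degree 2 in G with neighbors u and w. Then every cycle through v contains both edges uv and vw, and any shortest cycle C(v) through v yields: upon deleting edge uv, the distance from u to v increases by exactly |C(v)| − 2. -/

import Mathlib

open SimpleGraph Walk

-- walk ending at v whose support is nodup and containing edge s(u,v) must end with that edge
private lemma helper_concat {V : Type*} {G : SimpleGraph V} {u : V} :
    ∀ {a b : V} (q : G.Walk a b), u ≠ b → q.support.Nodup → s(u,b) ∈ q.edges →
      ∃ (r : G.Walk a u) (h : G.Adj u b), q = r.concat h := by
  intro a b q
  induction q with
  | nil => intro _ _ h; simp at h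
  | @cons a x b h q' ih =>
    intro hne hnd hmem
    rw [support_cons, List.nodup_cons] at hnd
    rw [edges_cons, List.mem_cons] at hmem
    rcases hmem with heq | hmem
    · rw [Sym2.eq_iff] at heq
      rcases heq with ⟨hu, hv⟩ | ⟨hu, hv⟩
      · -- hu : u = a, hv : b = x
        subst hu
        subst hv
        have hq' : q' = Walk.nil := by
          cases q' with
          | nil => rfl
          | cons h'' r'' =>
            exfalso
            rw [support_cons, List.nodup_cons] at hnd
            exact hnd.2.1 (Walk.end_mem_support r'')
        subst hq'
        exact ⟨Walk.nil, h, (Walk.concat_nil h).symm⟩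
      · -- hu : u = x, hv : b = a
        exfalso
        subst hv
        exact hnd.1 (Walk.end_mem_support q')
    · obtain ⟨r', h', rfl⟩ := ih hne hnd.2 hmem
      exact ⟨Walk.cons h r', h', by rw [Walk.concat_cons]⟩

private lemma cycle_remove {V : Type*} {G : SimpleGraph V} {u v : V} (hne : u ≠ v)
    (c : G.Walk v v) (hc : c.IsCycle) (he : s(u,v) ∈ c.edges) :
    ∃ p : (G.deleteEdges {s(u,v)}).Walk u v, p.length + 1 = c.length := by
  have hnn : ¬ c.Nil := by
    intro h
    have := hc.three_le_length
    rw [Walk.nil_iff_length_eq] at h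
    omega
  obtain ⟨x, h₀, q, rfl⟩ := Walk.not_nil_iff.mp hnn
  have hnd : ((Walk.cons h₀ q).edges).Nodup := hc.edges_nodup
  rw [edges_cons, List.nodup_cons] at hnd
  have hsup : q.support.Nodup := by
    have := hc.2
    rwa [support_cons, List.tail_cons] at this
  rw [edges_cons, List.mem_cons] at he
  have hedge : ∀ (r : G.Walk u v), s(u,v) ∉ r.edges →
      ∀ e ∈ r.edges, e ∈ (G.deleteEdges {s(u,v)}).edgeSet := by
    intro r hr e hme
    rw [edgeSet_deleteEdges]
    refine ⟨r.edges_subset_edgeSet hme, ?_⟩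
    simp only [Set.mem_singleton_iff]
    rintro rfl; exact hr hme
  rcases he with heq | hmem
  · rw [Sym2.eq_iff] at heq
    rcases heq with ⟨hu, hv⟩ | ⟨hu, hv⟩
    · exact absurd hu hne
    · subst hu
      have hq : s(u,v) ∉ q.edges := by
        rw [Sym2.eq_swap]; exact hnd.1
      exact ⟨q.transfer _ (hedge q hq), by
        rw [Walk.length_transfer, Walk.length_cons]⟩
  · obtain ⟨r, h', rfl⟩ := helper_concat q hne hsup hmem
    have hav : s(u,v) ∉ (Walk.cons h₀ r).edges := by
      intro hmm
      rw [Walk.edges_concat, List.concat_eq_append] at hnd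
      rw [edges_cons, List.mem_cons] at hmm
      rcases hmm with hmm | hmm
      · exact hnd.1 (by rw [← hmm]; simp)
      · have := (List.nodup_append'.mp hnd.2).2.2
        exact this hmm (List.mem_singleton_self _)
    have hrev : s(u,v) ∉ (Walk.cons h₀ r).reverse.edges := by
      rwa [Walk.edges_reverse, List.mem_reverse]
    refine ⟨((Walk.cons h₀ r).reverse).transfer _
      (hedge _ hrev), ?_⟩
    rw [Walk.length_transfer, Walk.length_reverse, Walk.length_cons, Walk.length_cons,
      Walk.length_concat]

theorem degree_two_cycle_edges {V : Type*} (G : SimpleGraph V) (hG : G.Connected)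
    (v u w : V) (huw : u ≠ w) (hvu : G.Adj v u) (hvw : G.Adj v w)
    (hdeg : G.neighborSet v = {u, w}) :
    (∀ (c : G.Walk v v), c.IsCycle → s(u, v) ∈ c.edges ∧ s(v, w) ∈ c.edges) ∧
      (∀ (c : G.Walk v v), c.IsCycle →
        (∀ c' : G.Walk v v, c'.IsCycle → c.length ≤ c'.length) →
        (G.deleteEdges {s(u, v)}).Connected →
        (G.deleteEdges {s(u, v)}).dist u v = G.dist u v + (c.length - 2)) := by
  have hneighbor : ∀ x, G.Adj v x → x = u ∨ x = w := by
    intro x hx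
    have : x ∈ G.neighborSet v := hx
    rw [hdeg] at this
    simpa using this
  have part1 : ∀ (c : G.Walk v v), c.IsCycle → s(u, v) ∈ c.edges ∧ s(v, w) ∈ c.edges := by
    intro c hc
    have hL := hc.three_le_length
    have hnn : ¬ c.Nil := by
      rw [Walk.nil_iff_length_eq]; omega
    have hnnr : ¬ c.reverse.Nil := by
      rw [Walk.nil_iff_length_eq, Walk.length_reverse]; omega
    obtain ⟨x, h₀, q, hcq⟩ := Walk.not_nil_iff.mp hnn
    obtain ⟨y, h₁, q', hcq'⟩ := Walk.not_nil_iff.mp hnnr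
    have hx : s(v, x) ∈ c.edges := by rw [hcq]; simp
    have hy : s(v, y) ∈ c.edges := by
      have : s(v, y) ∈ c.reverse.edges := by rw [hcq']; simp
      rwa [Walk.edges_reverse, List.mem_reverse] at this
    have hxy : x ≠ y := by
      rintro rfl
      have hnd : c.edges.Nodup := hc.edges_nodup
      have h1 : c.edges = s(v, x) :: q.edges := by rw [hcq]; simp
      have h2 : c.edges.reverse = s(v, x) :: q'.edges := by
        rw [← Walk.edges_reverse, hcq']; simp
      have h3 : c.edges = q'.edges.reverse ++ [s(v, x)] := by
        rw [← List.reverse_reverse c.edges, h2]; simp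
      rw [h1] at h3 hnd
      rw [List.nodup_cons] at hnd
      cases hqr : q'.edges.reverse with
      | nil =>
        rw [hqr] at h3; simp at h3
        have : c.length = 1 := by
          simp [hcq, Walk.nil_iff_length_eq.mp h3]
        omega
      | cons e t =>
        rw [hqr] at h3
        simp only [List.cons_append, List.cons.injEq] at h3
        exact hnd.1 (h3.2 ▸ List.mem_append_right t (List.mem_singleton_self _))
    rcases hneighbor x h₀ with rfl | rfl
    · rcases hneighbor y h₁ with rfl | rfl
      · exact absurd rfl hxy
      · exact ⟨by rwa [Sym2.eq_swap], hy⟩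
    · rcases hneighbor y h₁ with rfl | rfl
      · exact ⟨by rwa [Sym2.eq_swap], hx⟩
      · exact absurd rfl hxy
  refine ⟨part1, ?_⟩
  intro c hc hmin hconn'
  have hne : u ≠ v := hvu.ne'
  have hL := hc.three_le_length
  have he : s(u,v) ∈ c.edges := (part1 c hc).1
  -- upper bound
  obtain ⟨p, hp⟩ := cycle_remove hne c hc he
  have hub : (G.deleteEdges {s(u, v)}).dist u v ≤ p.length := SimpleGraph.dist_le p
  -- lower bound
  obtain ⟨p', hp'path, hp'len⟩ := hconn'.exists_path_of_dist u v
  have htrans : ∀ e ∈ p'.edges, e ∈ G.edgeSet := by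
    intro e hme
    have := p'.edges_subset_edgeSet hme
    rw [edgeSet_deleteEdges] at this
    exact this.1
  set q₁ := p'.transfer G htrans with hq₁
  have hq₁path : q₁.IsPath := hp'path.transfer htrans
  have hq₁edges : s(v, u) ∉ q₁.edges := by
    rw [hq₁, Walk.edges_transfer]
    intro hmm
    have := p'.edges_subset_edgeSet hmm
    rw [edgeSet_deleteEdges] at this
    exact this.2 (by rw [Sym2.eq_swap]; rfl)
  have hcyc : (Walk.cons hvu q₁).IsCycle :=
    (Walk.cons_isCycle_iff q₁ hvu).mpr ⟨hq₁path, hq₁edges⟩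
  have hlb := hmin _ hcyc
  rw [Walk.length_cons, Walk.length_transfer, hp'len] at hlb
  have hd1 : G.dist u v = 1 := SimpleGraph.dist_eq_one_iff_adj.mpr hvu.symm
  omega
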